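/- The quadrilateral transformation is 2-periodic on parallelogram-type quadrilaterals: let x₀, x₁ ∈ ℝ² be nonzero and set x₂ = −x₀ and x₃ = −x₁ (so that ‖x₀‖ = ‖x₂‖, ‖x₁‖ = ‖x₃‖ and the centroid is the origin). Then applying the k = 4 polygon transformation twice to Q⁽⁰⁾ = (x₀, x₁, x₂, x₃) returns the original quadrilateral: Q⁽²⁾ = Q⁽⁰⁾. In particular, for ‖x₀‖ ≠ ‖x₁‖ the iteration does not converge, so the polygon transformation has no globally attracting fixed point for k = 4. -/
import Mathlib

/-- One step of the polygon transformation for quadrilaterals (`k = 4`) with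
centroid at the origin: `xᵢ′ = (3/4) rᵢ xᵢ − (1/4) Σ_{j≠i} r_j x_j` with
`rᵢ = ‖x_{i−1}‖/‖xᵢ‖`. -/
noncomputable def quadStep (x : ZMod 4 → EuclideanSpace ℝ (Fin 2)) :
    ZMod 4 → EuclideanSpace ℝ (Fin 2) := fun i =>
  ((3 : ℝ) / 4 * (‖x (i - 1)‖ / ‖x i‖)) • x i
    - (4 : ℝ)⁻¹ • ∑ j ∈ Finset.univ.erase i, (‖x (j - 1)‖ / ‖x j‖) • x j

lemma quadStep_para (u v : EuclideanSpace ℝ (Fin 2)) :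
    quadStep (fun i => if i = 0 then u else if i = 1 then v else if i = 2 then -u else -v)
    = fun i => if i = 0 then (‖v‖/‖u‖) • u else if i = 1 then (‖u‖/‖v‖) • v
        else if i = 2 then -((‖v‖/‖u‖) • u) else -((‖u‖/‖v‖) • v) := by
  have huniv : (Finset.univ : Finset (ZMod 4)) = {0, 1, 2, 3} := by decide
  have h4 : ∀ i : ZMod 4, i = 0 ∨ i = 1 ∨ i = 2 ∨ i = 3 := by decide
  funext i
  rcases h4 i with h | h | h | h <;> subst h <;>
  · simp only [quadStep, huniv]
    norm_num (config := { decide := true }) [Finset.sum_insert, Finset.erase_insert,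
      Finset.mem_insert, norm_neg]
    module

/-- The quadrilateral transformation is 2-periodic on parallelogram-type
quadrilaterals `(x₀, x₁, −x₀, −x₁)`; in particular, if `‖x₀‖ ≠ ‖x₁‖` the
iteration does not converge, so the polygon transformation has no globally
attracting fixed point for `k = 4`. -/
theorem quadStep_two_periodic (x₀ x₁ : EuclideanSpace ℝ (Fin 2))
    (h₀ : x₀ ≠ 0) (h₁ : x₁ ≠ 0)
    (Q : ZMod 4 → EuclideanSpace ℝ (Fin 2))
    (hQ : Q = fun i => if i = 0 then x₀ else if i = 1 then x₁
      else if i = 2 then -x₀ else -x₁) :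
    quadStep (quadStep Q) = Q ∧
      (‖x₀‖ ≠ ‖x₁‖ → ∀ L : ZMod 4 → EuclideanSpace ℝ (Fin 2),
        ¬ Filter.Tendsto (fun n => quadStep^[n] Q) Filter.atTop (nhds L)) := by
  have ha : ‖x₀‖ ≠ 0 := norm_ne_zero_iff.mpr h₀
  have hb : ‖x₁‖ ≠ 0 := norm_ne_zero_iff.mpr h₁
  have h4 : ∀ i : ZMod 4, i = 0 ∨ i = 1 ∨ i = 2 ∨ i = 3 := by decide
  subst hQ
  have h2 : quadStep (quadStep (fun i => if i = 0 then x₀ else if i = 1 then x₁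
      else if i = 2 then -x₀ else -x₁)) = (fun i => if i = 0 then x₀ else if i = 1 then x₁
      else if i = 2 then -x₀ else -x₁) := by
    rw [quadStep_para, quadStep_para]
    funext i
    rcases h4 i with h | h | h | h <;> subst h <;>
    · norm_num (config := { decide := true }) [norm_smul, abs_div, abs_norm, smul_smul, neg_inj]
      convert one_smul ℝ _ using 2
      field_simp
  refine ⟨h2, ?_⟩
  intro hab L hT
  set Q : ZMod 4 → EuclideanSpace ℝ (Fin 2) :=
    fun i => if i = 0 then x₀ else if i = 1 then x₁ else if i = 2 then -x₀ else -x₁ with hQdef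
  have hQ2 : quadStep^[2] Q = Q := h2
  have heven : ∀ n, quadStep^[2 * n] Q = Q := by
    intro n
    induction n with
    | zero => rfl
    | succ n ih =>
        rw [show 2 * (n + 1) = 2 * n + 2 by ring, Function.iterate_add_apply, hQ2, ih]
  have hodd : ∀ n, quadStep^[2 * n + 1] Q = quadStep Q := by
    intro n
    rw [show 2 * n + 1 = 1 + 2 * n by ring, Function.iterate_add_apply, heven]
    rfl
  have t2 : Filter.Tendsto (fun n : ℕ => 2 * n) Filter.atTop Filter.atTop :=
    Filter.tendsto_atTop_mono (fun n => by change n ≤ _; omega) Filter.tendsto_id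
  have t3 : Filter.Tendsto (fun n : ℕ => 2 * n + 1) Filter.atTop Filter.atTop :=
    Filter.tendsto_atTop_mono (fun n => by change n ≤ _; omega) Filter.tendsto_id
  have hLe : L = Q := by
    have := hT.comp t2
    simp only [Function.comp_def, heven] at this
    exact tendsto_nhds_unique this tendsto_const_nhds
  have hLo : L = quadStep Q := by
    have := hT.comp t3
    simp only [Function.comp_def, hodd] at this
    exact tendsto_nhds_unique this tendsto_const_nhds
  have hne : quadStep Q ≠ Q := by
    intro hEq
    have h0 : (‖x₁‖ / ‖x₀‖) • x₀ = x₀ := by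
      have := congrFun hEq 0
      rw [hQdef, quadStep_para] at this
      simpa using this
    have : (‖x₁‖ / ‖x₀‖ - 1) • x₀ = 0 := by
      rw [sub_smul, one_smul, h0, sub_self]
    rcases smul_eq_zero.mp this with hc | hx
    · have : ‖x₁‖ / ‖x₀‖ = 1 := by linarith
      exact hab ((div_eq_one_iff_eq ha).mp this).symm
    · exact h₀ hx
  exact hne (hLo ▸ hLe ▸ rfl)
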